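/- Let G be a simple graph with no isolated vertices, and let λ(G) = max{|deg(u) − deg(v)| : u adjacent to v}. Let t be a constant vector with t_v = t for all v where t ≤ −λ(G), and let p_v ≤ −deg(v) for all v. Then C_t(v) = deg(v) for every vertex v. -/

import Mathlib

open Finset

/-- A (padded) `[t,p]`-separate chain of the induced subgraph of `G` on the vertex set `A`:
an antitone sequence of vertex sets starting at `A` (padded with `∅` beyond its size) such
that every vertex `v` in the `i`-th member has at least `max {0, i + p v}` neighbors in the
`i`-th member and at least `i` neighbors in the `max {0, i + t v}`-th member. -/
def SepChainFrom {n : ℕ} (G : SimpleGraph (Fin n)) [DecidableRel G.Adj]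
    (t p : Fin n → ℤ) (A : Finset (Fin n)) (S : ℕ → Finset (Fin n)) : Prop :=
  S 0 = A ∧
  (∀ i, S (i + 1) ⊆ S i) ∧
  (∀ i, ∀ v ∈ S i,
    max 0 ((i : ℤ) + p v) ≤ (((S i).filter (G.Adj v)).card : ℤ) ∧
    (i : ℤ) ≤ (((S (((i : ℤ) + t v).toNat)).filter (G.Adj v)).card : ℤ))

/-- A `[t,p]`-separate chain of `G` itself. -/
def SepChain {n : ℕ} (G : SimpleGraph (Fin n)) [DecidableRel G.Adj]
    (t p : Fin n → ℤ) (S : ℕ → Finset (Fin n)) : Prop :=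
  SepChainFrom G t p Finset.univ S

open Classical in
/-- `rank G t p v = C_{t,p}(v)`, the largest `i` such that `v` belongs to the `i`-th member of
some (equivalently, of the maximal) `[t,p]`-separate chain of `G`. -/
noncomputable def rank {n : ℕ} (G : SimpleGraph (Fin n)) [DecidableRel G.Adj]
    (t p : Fin n → ℤ) (v : Fin n) : ℕ :=
  Nat.findGreatest (fun i => ∃ S : ℕ → Finset (Fin n), SepChain G t p S ∧ v ∈ S i) n

/-- `lam G = λ(G)`, the maximum absolute degree difference over adjacent pairs. -/
def lam {n : ℕ} (G : SimpleGraph (Fin n)) [DecidableRel G.Adj] : ℕ :=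
  Finset.univ.sup (fun e : Fin n × Fin n =>
    if G.Adj e.1 e.2 then ((G.degree e.1 : ℤ) - (G.degree e.2 : ℤ)).natAbs else 0)

/-- If `G` has no isolated vertices, `t` is constant with `t ≤ -λ(G)`, and
`p v ≤ -deg v` for all `v`, then `C_t(v) = deg v` for every vertex `v`. -/
theorem rank_eq_degree {n : ℕ} (G : SimpleGraph (Fin n)) [DecidableRel G.Adj]
    (hiso : ∀ v : Fin n, 0 < G.degree v)
    (t : ℤ) (ht : t ≤ -(lam G : ℤ))
    (p : Fin n → ℤ) (hp : ∀ v : Fin n, p v ≤ -(G.degree v : ℤ)) :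
    ∀ v : Fin n, rank G (fun _ => t) p v = G.degree v := by
  classical
  intro v
  -- adjacent degree bound
  have hadj : ∀ u w : Fin n, G.Adj u w → (G.degree u : ℤ) - G.degree w ≤ lam G := by
    intro u w h
    have : ((G.degree u : ℤ) - G.degree w).natAbs ≤ lam G := by
      have := Finset.le_sup (f := fun e : Fin n × Fin n =>
        if G.Adj e.1 e.2 then ((G.degree e.1 : ℤ) - (G.degree e.2 : ℤ)).natAbs else 0)
        (Finset.mem_univ (u, w))
      simpa [h, lam] using this
    calc (G.degree u : ℤ) - G.degree w ≤ ((G.degree u : ℤ) - G.degree w).natAbs :=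
          Int.le_natAbs
      _ ≤ lam G := by exact_mod_cast this
  -- the canonical chain
  set S : ℕ → Finset (Fin n) := fun i => Finset.univ.filter (fun w => i ≤ G.degree w) with hS
  have hmem : ∀ i w, w ∈ S i ↔ i ≤ G.degree w := by
    intro i w; simp [hS]
  have hchain : SepChain G (fun _ => t) p S := by
    refine ⟨?_, ?_, ?_⟩
    · ext w; simp [hS]
    · intro i w hw
      rw [hmem] at hw ⊢; omega
    · intro i w hw
      rw [hmem] at hw
      constructor
      · have h1 : (i : ℤ) + p w ≤ 0 := by
          have := hp w; push_cast; omega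
        have : max 0 ((i : ℤ) + p w) = 0 := max_eq_left h1
        rw [this]; positivity
      · -- neighbors of w are in S ((i + t).toNat)
        have hsub : G.neighborFinset w ⊆
            (S (((i : ℤ) + t).toNat)).filter (G.Adj w) := by
          intro u hu
          rw [SimpleGraph.mem_neighborFinset] at hu
          refine Finset.mem_filter.mpr ⟨?_, hu⟩
          rw [hmem]
          have h2 : (i : ℤ) + t ≤ G.degree u := by
            have := hadj w u hu
            omega
          omega
        have := Finset.card_le_card hsub
        have hd : G.degree w ≤ ((S (((i : ℤ) + t).toNat)).filter (G.Adj w)).card := by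
          rwa [SimpleGraph.card_neighborFinset_eq_degree] at this
        push_cast; omega
  have hub : ∀ i, (∃ S' : ℕ → Finset (Fin n), SepChain G (fun _ => t) p S' ∧ v ∈ S' i) →
      i ≤ G.degree v := by
    rintro i ⟨S', ⟨_, _, h3⟩, hv⟩
    have h4 := (h3 i v hv).2
    simp only at h4
    have hsub : (S' (((i : ℤ) + t).toNat)).filter (G.Adj v) ⊆ G.neighborFinset v := by
      intro u hu
      rw [SimpleGraph.mem_neighborFinset]
      exact (Finset.mem_filter.mp hu).2
    have h5 := Finset.card_le_card hsub
    rw [SimpleGraph.card_neighborFinset_eq_degree] at h5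
    omega
  have hdn : G.degree v ≤ n := by
    have := G.degree_lt_card_verts v
    simp only [Fintype.card_fin] at this
    omega
  have h0 : ∃ S' : ℕ → Finset (Fin n), SepChain G (fun _ => t) p S' ∧ v ∈ S' 0 :=
    ⟨S, hchain, by rw [hmem]; omega⟩
  apply le_antisymm
  · refine hub _ ?_
    unfold rank
    exact Nat.findGreatest_spec (P := fun i => ∃ S' : ℕ → Finset (Fin n),
      SepChain G (fun _ => t) p S' ∧ v ∈ S' i) (Nat.zero_le n) h0
  · exact Nat.le_findGreatest hdn ⟨S, hchain, by rw [hmem]⟩
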